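/- Let G be a twin-free graph of the form H + K_1, where H has at least one edge. Then for every t ≥ 1, det(μ_t(G)) = det(G) + t − 1. -/

import Mathlib

open SimpleGraph

/-- The generalized Mycielskian `μ_t(G)`: vertices are `some (s, i)` for levels
`0 ≤ s ≤ t` (level `0` being the original vertices) plus a root `none`. -/
def Mycielskian {V : Type*} (G : SimpleGraph V) (t : ℕ) :
    SimpleGraph (Option (Fin (t + 1) × V)) where
  Adj x y :=
    match x, y with
    | none, none => False
    | none, some (s, _) => s.val = t
    | some (s, _), none => s.val = t
    | some (s, i), some (r, j) =>
        G.Adj i j ∧ ((s.val = 0 ∧ r.val = 0) ∨ s.val + 1 = r.val ∨ r.val + 1 = s.val)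
  symm := by
    constructor
    rintro (_ | ⟨s, i⟩) (_ | ⟨r, j⟩) h
    · exact h
    · exact h
    · exact h
    · exact ⟨h.1.symm, by tauto⟩
  loopless := by
    constructor
    rintro (_ | ⟨s, i⟩) h
    · exact h
    · exact G.irrefl h.1

/-- `S` is a determining set for `G`: the only automorphism fixing `S` pointwise
is the identity. -/
def IsDetermining {V : Type*} (G : SimpleGraph V) (S : Set V) : Prop :=
  ∀ φ : G ≃g G, (∀ v ∈ S, φ v = v) → ∀ v, φ v = v

/-- The determining number of `G`. -/
noncomputable def detNum {V : Type*} (G : SimpleGraph V) : ℕ :=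
  sInf {n | ∃ S : Finset V, S.card = n ∧ IsDetermining G ↑S}

/-- A coloring is distinguishing if no nontrivial automorphism preserves all
color classes. -/
def IsDistinguishing {V : Type*} (G : SimpleGraph V) {C : Type*} (c : V → C) : Prop :=
  ∀ φ : G ≃g G, (∀ v, c (φ v) = c v) → ∀ v, φ v = v

/-- The distinguishing number of `G`. -/
noncomputable def distNum {V : Type*} (G : SimpleGraph V) : ℕ :=
  sInf {d | ∃ c : V → Fin d, IsDistinguishing G c}

/-- The cost of 2-distinguishing: the minimum size of a color class over all
2-distinguishing colorings. -/
noncomputable def cost2 {V : Type*} (G : SimpleGraph V) [Fintype V] : ℕ :=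
  sInf {n | ∃ c : V → Bool, IsDistinguishing G c ∧
    n = (Finset.univ.filter fun v => c v = true).card}

/-- The twin equivalence relation: equal open neighborhoods. -/
def twinSetoid {V : Type*} (G : SimpleGraph V) : Setoid V where
  r x y := G.neighborSet x = G.neighborSet y
  iseqv := ⟨fun _ => rfl, Eq.symm, Eq.trans⟩

/-- The twin quotient graph `G̃`. -/
def twinQuotient {V : Type*} (G : SimpleGraph V) :
    SimpleGraph (Quotient (twinSetoid G)) where
  Adj a b := ∃ p q : V, Quotient.mk (twinSetoid G) p = a ∧
    Quotient.mk (twinSetoid G) q = b ∧ G.Adj p q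
  symm := by constructor; rintro a b ⟨p, q, hp, hq, h⟩; exact ⟨q, p, hq, hp, h.symm⟩
  loopless := by
    constructor
    rintro a ⟨p, q, rfl, hq, h⟩
    have htw : G.neighborSet q = G.neighborSet p := Quotient.exact hq
    have hmem : q ∈ G.neighborSet p := h
    rw [← htw] at hmem
    exact G.irrefl hmem

/-- A twin cover: contains at least one of every pair of distinct twins. -/
def IsTwinCover {V : Type*} (G : SimpleGraph V) (T : Set V) : Prop :=
  ∀ x y : V, x ≠ y → G.neighborSet x = G.neighborSet y → x ∈ T ∨ y ∈ T

/-- A minimum twin cover. -/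
def IsMinTwinCover {V : Type*} (G : SimpleGraph V) (T : Set V) : Prop :=
  IsTwinCover G T ∧ ∀ T' : Set V, IsTwinCover G T' → T.ncard ≤ T'.ncard

/-- Attach `ℓ` pendant vertices to the vertex `w` of `G`. -/
def attachPendants {V : Type*} (G : SimpleGraph V) (w : V) (ℓ : ℕ) :
    SimpleGraph (V ⊕ Fin ℓ) where
  Adj x y :=
    match x, y with
    | Sum.inl a, Sum.inl b => G.Adj a b
    | Sum.inl a, Sum.inr _ => a = w
    | Sum.inr _, Sum.inl b => b = w
    | Sum.inr _, Sum.inr _ => False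
  symm := by constructor; rintro (a | a) (b | b) h <;> simp_all <;> exact h.symm
  loopless := by constructor; rintro (a | a) h <;> simp_all

section Aux

variable {W : Type*} {G : SimpleGraph W} {t : ℕ}

lemma myc_adj_ss {s r : Fin (t+1)} {i j : W} :
    (Mycielskian G t).Adj (some (s,i)) (some (r,j)) ↔
      G.Adj i j ∧ ((s.val = 0 ∧ r.val = 0) ∨ s.val + 1 = r.val ∨ r.val + 1 = s.val) :=
  Iff.rfl

lemma myc_adj_ns {s : Fin (t+1)} {i : W} :
    (Mycielskian G t).Adj none (some (s,i)) ↔ s.val = t := Iff.rfl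

lemma myc_adj_sn {s : Fin (t+1)} {i : W} :
    (Mycielskian G t).Adj (some (s,i)) none ↔ s.val = t := Iff.rfl

lemma myc_adj_nn : ¬ (Mycielskian G t).Adj none none := id

end Aux

section Main
variable {V : Type*} {H : SimpleGraph V}

lemma g_adj_inl {a b : V} : (H ⊕g (⊥ : SimpleGraph Unit)).Adj (Sum.inl a) (Sum.inl b) ↔ H.Adj a b := by simp

lemma g_not_adj_u (x : V ⊕ Unit) : ¬ (H ⊕g (⊥ : SimpleGraph Unit)).Adj x (Sum.inr ()) := by
  cases x <;> simp

lemma g_not_adj_u' (x : V ⊕ Unit) : ¬ (H ⊕g (⊥ : SimpleGraph Unit)).Adj (Sum.inr ()) x := by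
  cases x <;> simp

end Main
section Main2
variable {V : Type*} {H : SimpleGraph V}

lemma nbhd_inl_eq {a b : V} (h : ∀ v, H.Adj v a ↔ H.Adj v b) :
    (H ⊕g (⊥ : SimpleGraph Unit)).neighborSet (Sum.inl a) =
    (H ⊕g (⊥ : SimpleGraph Unit)).neighborSet (Sum.inl b) := by
  ext x
  cases x with
  | inl v => simpa [SimpleGraph.neighborSet, SimpleGraph.adj_comm] using h v
  | inr v => simp [SimpleGraph.neighborSet]

variable (htf : ∀ x y : V ⊕ Unit,
      (H ⊕g (⊥ : SimpleGraph Unit)).neighborSet x =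
        (H ⊕g (⊥ : SimpleGraph Unit)).neighborSet y → x = y)

include htf

lemma exists_nbr (v : V) : ∃ w, H.Adj v w := by
  by_contra hc
  push_neg at hc
  have : (H ⊕g (⊥ : SimpleGraph Unit)).neighborSet (Sum.inl v) =
      (H ⊕g (⊥ : SimpleGraph Unit)).neighborSet (Sum.inr ()) := by
    ext x
    cases x with
    | inl w =>
      simp only [SimpleGraph.neighborSet, Set.mem_setOf_eq, g_adj_inl, SimpleGraph.sum_adj]
      simp [hc w]
    | inr w => simp [SimpleGraph.neighborSet]
  exact absurd (htf _ _ this) (by simp)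

lemma inl_eq_of_nbr (a b : V) (h : ∀ v, H.Adj v a ↔ H.Adj v b) : a = b := by
  have := htf _ _ (nbhd_inl_eq h)
  simpa using this

end Main2

section Main3
variable {V : Type*} {H : SimpleGraph V}

lemma fix_u (ψ : (H ⊕g (⊥ : SimpleGraph Unit)) ≃g (H ⊕g (⊥ : SimpleGraph Unit)))
    (htf : ∀ x y : V ⊕ Unit,
      (H ⊕g (⊥ : SimpleGraph Unit)).neighborSet x =
        (H ⊕g (⊥ : SimpleGraph Unit)).neighborSet y → x = y) :
    ψ (Sum.inr ()) = Sum.inr () := by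
  apply htf
  ext x
  constructor
  · intro hx
    have : (H ⊕g (⊥ : SimpleGraph Unit)).Adj (ψ (Sum.inr ())) x := hx
    rw [show x = ψ (ψ.symm x) from (ψ.apply_symm_apply x).symm] at this
    exact absurd (ψ.map_adj_iff.mp this) (g_not_adj_u' _)
  · intro hx
    exact absurd hx (g_not_adj_u' _)

end Main3
section Main4
variable {V : Type*} {H : SimpleGraph V} {t : ℕ}

variable (htf : ∀ x y : V ⊕ Unit,
      (H ⊕g (⊥ : SimpleGraph Unit)).neighborSet x =
        (H ⊕g (⊥ : SimpleGraph Unit)).neighborSet y → x = y)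

lemma isolated_of (s : Fin (t+1)) (hs : s.val < t) (y : Option (Fin (t+1) × (V ⊕ Unit))) :
    ¬ (Mycielskian (H ⊕g (⊥ : SimpleGraph Unit)) t).Adj (some (s, Sum.inr ())) y := by
  match y with
  | none => exact fun h => absurd (myc_adj_sn.mp h) (by omega)
  | some (r, j) => exact fun h => g_not_adj_u' _ h.1

include htf

lemma not_isolated_inl (ht : 1 ≤ t) (s : Fin (t+1)) (w : V) :
    ∃ y, (Mycielskian (H ⊕g (⊥ : SimpleGraph Unit)) t).Adj (some (s, Sum.inl w)) y := by
  obtain ⟨w', hw'⟩ := exists_nbr htf w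
  rcases Nat.lt_or_ge s.val t with hs | hs
  · exact ⟨some (⟨s.val + 1, by omega⟩, Sum.inl w'), by
      refine myc_adj_ss.mpr ⟨g_adj_inl.mpr hw', Or.inr (Or.inl rfl)⟩⟩
  · exact ⟨none, myc_adj_sn.mpr (by omega)⟩

lemma isolated_char (ht : 1 ≤ t) (x : Option (Fin (t+1) × (V ⊕ Unit)))
    (hx : ∀ y, ¬ (Mycielskian (H ⊕g (⊥ : SimpleGraph Unit)) t).Adj x y) :
    ∃ s : Fin (t+1), s.val < t ∧ x = some (s, Sum.inr ()) := by
  match x with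
  | none =>
    exact absurd (myc_adj_ns.mpr (show (⟨t, by omega⟩ : Fin (t+1)).val = t from rfl))
      (hx (some (⟨t, by omega⟩, Sum.inr ())))
  | some (s, Sum.inl w) =>
    obtain ⟨y, hy⟩ := not_isolated_inl htf ht s w
    exact absurd hy (hx y)
  | some (s, Sum.inr ()) =>
    refine ⟨s, ?_, rfl⟩
    by_contra hs
    have hs' : s.val = t := by omega
    exact hx none (myc_adj_sn.mpr hs')

omit htf in
/-- the pendant vertex -/
lemma adj_pend (ht : 1 ≤ t) (y : Option (Fin (t+1) × (V ⊕ Unit))) :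
    (Mycielskian (H ⊕g (⊥ : SimpleGraph Unit)) t).Adj (some (⟨t, by omega⟩, Sum.inr ())) y ↔
      y = none := by
  constructor
  · intro h
    match y with
    | none => rfl
    | some (r, j) => exact absurd h.1 (g_not_adj_u' _)
  · rintro rfl
    exact myc_adj_sn.mpr rfl

omit htf in
lemma pend_unique' (hedge : ∃ a b : V, H.Adj a b)
    (htf : ∀ x y : V ⊕ Unit,
      (H ⊕g (⊥ : SimpleGraph Unit)).neighborSet x =
        (H ⊕g (⊥ : SimpleGraph Unit)).neighborSet y → x = y)
    (ht : 1 ≤ t) (x y : Option (Fin (t+1) × (V ⊕ Unit)))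
    (hxy : (Mycielskian (H ⊕g (⊥ : SimpleGraph Unit)) t).Adj x y)
    (huniq : ∀ z, (Mycielskian (H ⊕g (⊥ : SimpleGraph Unit)) t).Adj x z → z = y) :
    x = some (⟨t, by omega⟩, Sum.inr ()) := by
  match x with
  | none =>
    obtain ⟨a, b, hab⟩ := hedge
    have h1 : (Mycielskian (H ⊕g (⊥ : SimpleGraph Unit)) t).Adj none
        (some (⟨t, by omega⟩, Sum.inl a)) := myc_adj_ns.mpr rfl
    have h2 : (Mycielskian (H ⊕g (⊥ : SimpleGraph Unit)) t).Adj none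
        (some (⟨t, by omega⟩, Sum.inl b)) := myc_adj_ns.mpr rfl
    have := (huniq _ h1).trans (huniq _ h2).symm
    simp only [Option.some.injEq, Prod.mk.injEq, Sum.inl.injEq] at this
    exact absurd this.2 hab.ne
  | some (s, Sum.inl w) =>
    obtain ⟨w', hw'⟩ := exists_nbr htf w
    exfalso
    rcases Nat.lt_or_ge s.val t with hs | hs
    · have h1 : (Mycielskian (H ⊕g (⊥ : SimpleGraph Unit)) t).Adj (some (s, Sum.inl w))
          (some (⟨s.val + 1, by omega⟩, Sum.inl w')) :=
        myc_adj_ss.mpr ⟨g_adj_inl.mpr hw', Or.inr (Or.inl rfl)⟩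
      rcases Nat.eq_zero_or_pos s.val with hs0 | hs0
      · have h2 : (Mycielskian (H ⊕g (⊥ : SimpleGraph Unit)) t).Adj (some (s, Sum.inl w))
            (some (⟨0, by omega⟩, Sum.inl w')) :=
          myc_adj_ss.mpr ⟨g_adj_inl.mpr hw', Or.inl ⟨hs0, rfl⟩⟩
        have := (huniq _ h1).trans (huniq _ h2).symm
        simp only [Option.some.injEq, Prod.mk.injEq, Fin.mk.injEq] at this
        omega
      · have h2 : (Mycielskian (H ⊕g (⊥ : SimpleGraph Unit)) t).Adj (some (s, Sum.inl w))
            (some (⟨s.val - 1, by omega⟩, Sum.inl w')) :=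
          myc_adj_ss.mpr ⟨g_adj_inl.mpr hw', Or.inr (Or.inr (by simp; omega))⟩
        have := (huniq _ h1).trans (huniq _ h2).symm
        simp only [Option.some.injEq, Prod.mk.injEq, Fin.mk.injEq] at this
        omega
    · have h1 : (Mycielskian (H ⊕g (⊥ : SimpleGraph Unit)) t).Adj (some (s, Sum.inl w))
          none := myc_adj_sn.mpr (by omega)
      have h2 : (Mycielskian (H ⊕g (⊥ : SimpleGraph Unit)) t).Adj (some (s, Sum.inl w))
          (some (⟨t - 1, by omega⟩, Sum.inl w')) :=
        myc_adj_ss.mpr ⟨g_adj_inl.mpr hw', Or.inr (Or.inr (by simp; omega))⟩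
      have := (huniq _ h1).trans (huniq _ h2).symm
      simp at this
  | some (s, Sum.inr ()) =>
    rcases Nat.lt_or_ge s.val t with hs | hs
    · exact absurd hxy (isolated_of s hs y)
    · have : s = (⟨t, by omega⟩ : Fin (t+1)) := by
        apply Fin.ext; simp; omega
      rw [this]

end Main4
section Main5
variable {V : Type*} {H : SimpleGraph V} {t : ℕ}

lemma phi_fix (hedge : ∃ a b : V, H.Adj a b)
    (htf : ∀ x y : V ⊕ Unit,
      (H ⊕g (⊥ : SimpleGraph Unit)).neighborSet x =
        (H ⊕g (⊥ : SimpleGraph Unit)).neighborSet y → x = y)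
    (ht : 1 ≤ t)
    (φ : (Mycielskian (H ⊕g (⊥ : SimpleGraph Unit)) t) ≃g
         (Mycielskian (H ⊕g (⊥ : SimpleGraph Unit)) t)) :
    φ (some (⟨t, by omega⟩, Sum.inr ())) = some (⟨t, by omega⟩, Sum.inr ()) ∧
      φ none = none := by
  have h0 : (Mycielskian (H ⊕g (⊥ : SimpleGraph Unit)) t).Adj
      (some (⟨t, by omega⟩, Sum.inr ())) none := (adj_pend ht none).mpr rfl
  have hA : (Mycielskian (H ⊕g (⊥ : SimpleGraph Unit)) t).Adj
      (φ (some (⟨t, by omega⟩, Sum.inr ()))) (φ none) := φ.map_adj_iff.mpr h0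
  have huniq : ∀ z, (Mycielskian (H ⊕g (⊥ : SimpleGraph Unit)) t).Adj
      (φ (some (⟨t, by omega⟩, Sum.inr ()))) z → z = φ none := by
    intro z hz
    have h1 : (Mycielskian (H ⊕g (⊥ : SimpleGraph Unit)) t).Adj
        (φ (some (⟨t, by omega⟩, Sum.inr ()))) (φ (φ.symm z)) := by
      rw [RelIso.apply_symm_apply]; exact hz
    have h2 := φ.map_adj_iff.mp h1
    have h3 : φ.symm z = none := (adj_pend ht _).mp h2
    have h4 : φ (φ.symm z) = φ none := by rw [h3]
    rwa [RelIso.apply_symm_apply] at h4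
  have hfp := pend_unique' hedge htf ht _ _ hA huniq
  rw [hfp] at hA
  exact ⟨hfp, (adj_pend ht _).mp hA⟩

lemma levels (htf : ∀ x y : V ⊕ Unit,
      (H ⊕g (⊥ : SimpleGraph Unit)).neighborSet x =
        (H ⊕g (⊥ : SimpleGraph Unit)).neighborSet y → x = y)
    (ht : 1 ≤ t) :
    ∀ k : ℕ, ∀ (φ : (Mycielskian (H ⊕g (⊥ : SimpleGraph Unit)) t) ≃g
         (Mycielskian (H ⊕g (⊥ : SimpleGraph Unit)) t)),
      φ none = none → φ (some (⟨t, by omega⟩, Sum.inr ())) = some (⟨t, by omega⟩, Sum.inr ()) →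
      ∀ s : Fin (t+1), t - k ≤ s.val → ∀ w : V,
      ∃ w', φ (some (s, Sum.inl w)) = some (s, Sum.inl w') := by
  intro k
  induction k with
  | zero =>
    intro φ hn hp s hs w
    have hst : s.val = t := by omega
    have h0 : (Mycielskian (H ⊕g (⊥ : SimpleGraph Unit)) t).Adj (some (s, Sum.inl w)) none :=
      myc_adj_sn.mpr hst
    have hA : (Mycielskian (H ⊕g (⊥ : SimpleGraph Unit)) t).Adj
        (φ (some (s, Sum.inl w))) none := by
      have := φ.map_adj_iff.mpr h0
      rwa [hn] at this
    match hx : φ (some (s, Sum.inl w)) with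
    | none => rw [hx] at hA; exact absurd hA myc_adj_nn
    | some (r, Sum.inr ()) =>
      rw [hx] at hA
      have hrt : r.val = t := myc_adj_sn.mp hA
      have hr : r = (⟨t, by omega⟩ : Fin (t+1)) := Fin.ext hrt
      rw [hr] at hx
      rw [← hp] at hx
      have := φ.injective hx
      simp at this
    | some (r, Sum.inl w') =>
      rw [hx] at hA
      have hrt : r.val = t := myc_adj_sn.mp hA
      have hr : r = s := Fin.ext (by omega)
      exact ⟨w', by rw [hr]⟩
  | succ k ih =>
    intro φ hn hp s hs w
    rcases le_or_gt (t - k) s.val with hs' | hs'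
    · exact ih φ hn hp s hs' w
    · have hslt : s.val < t := by omega
      obtain ⟨w', hw'⟩ := exists_nbr htf w
      set s1 : Fin (t+1) := ⟨s.val + 1, by omega⟩ with hs1
      have hsymn : φ.symm none = none := by
        apply φ.injective
        rw [RelIso.apply_symm_apply, hn]
      have hsymp : φ.symm (some (⟨t, by omega⟩, Sum.inr ())) =
          some (⟨t, by omega⟩, Sum.inr ()) := by
        conv_lhs => rw [← hp]
        exact RelIso.symm_apply_apply _ _
      obtain ⟨w'', hw''⟩ := ih φ hn hp s1 (by simp [hs1]; omega) w'
      have hadj : (Mycielskian (H ⊕g (⊥ : SimpleGraph Unit)) t).Adj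
          (some (s, Sum.inl w)) (some (s1, Sum.inl w')) :=
        myc_adj_ss.mpr ⟨g_adj_inl.mpr hw', Or.inr (Or.inl rfl)⟩
      have hA : (Mycielskian (H ⊕g (⊥ : SimpleGraph Unit)) t).Adj
          (φ (some (s, Sum.inl w))) (some (s1, Sum.inl w'')) := by
        have := φ.map_adj_iff.mpr hadj
        rwa [hw''] at this
      match hx : φ (some (s, Sum.inl w)) with
      | none =>
        rw [← hn] at hx
        have := φ.injective hx
        simp at this
      | some (r, Sum.inr ()) =>
        rw [hx] at hA
        exact absurd hA.1 (g_not_adj_u' _)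
      | some (r, Sum.inl j') =>
        rw [hx] at hA
        rcases hA.2 with ⟨h1, h2⟩ | h1 | h1
        · simp [hs1] at h2
        · -- r.val + ... : s1 = r + 1?  here s.val+1 = r.val+... check direction
          -- myc_adj_ss : first is (r,...), second is (s1,...): r.val+1 = s1.val
          have hrs : r = s := Fin.ext (by simp [hs1] at h1; omega)
          exact ⟨j', by rw [hrs]⟩
        · -- s1.val + 1 = r.val, i.e. r.val = s.val + 2
          exfalso
          have hrv : r.val = s.val + 2 := by simp [hs1] at h1; omega
          obtain ⟨j'', hj''⟩ := ih φ.symm hsymn hsymp r (by omega) j'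
          have : φ.symm (some (r, Sum.inl j')) = some (s, Sum.inl w) := by
            rw [← hx]; exact RelIso.symm_apply_apply _ _
          rw [this] at hj''
          simp only [Option.some.injEq, Prod.mk.injEq] at hj''
          have := hj''.1
          omega
  
end Main5
section Main6
variable {V : Type*} {H : SimpleGraph V} {t : ℕ}

lemma myc_adj_zero (ht : 1 ≤ t) {v w : V ⊕ Unit} :
    (Mycielskian (H ⊕g (⊥ : SimpleGraph Unit)) t).Adj
      (some (⟨0, by omega⟩, v)) (some (⟨0, by omega⟩, w)) ↔
      (H ⊕g (⊥ : SimpleGraph Unit)).Adj v w := by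
  rw [myc_adj_ss]
  constructor
  · exact fun h => h.1
  · exact fun h => ⟨h, Or.inl ⟨rfl, rfl⟩⟩

lemma myc_adj_step {s : ℕ} (h : s + 1 ≤ t) {v w : V} :
    (Mycielskian (H ⊕g (⊥ : SimpleGraph Unit)) t).Adj
      (some (⟨s, by omega⟩, Sum.inl v)) (some (⟨s + 1, by omega⟩, Sum.inl w)) ↔
      H.Adj v w := by
  rw [myc_adj_ss]
  constructor
  · exact fun hh => g_adj_inl.mp hh.1
  · exact fun hh => ⟨g_adj_inl.mpr hh, Or.inr (Or.inl rfl)⟩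

lemma rigid [Fintype V] (hedge : ∃ a b : V, H.Adj a b)
    (htf : ∀ x y : V ⊕ Unit,
      (H ⊕g (⊥ : SimpleGraph Unit)).neighborSet x =
        (H ⊕g (⊥ : SimpleGraph Unit)).neighborSet y → x = y)
    (ht : 1 ≤ t)
    (S₀ : Finset (V ⊕ Unit)) (hdet : IsDetermining (H ⊕g (⊥ : SimpleGraph Unit)) ↑S₀)
    (φ : (Mycielskian (H ⊕g (⊥ : SimpleGraph Unit)) t) ≃g
         (Mycielskian (H ⊕g (⊥ : SimpleGraph Unit)) t))
    (hfix0 : ∀ v ∈ S₀, φ (some (⟨0, by omega⟩, v)) = some (⟨0, by omega⟩, v))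
    (hfixu : ∀ s : Fin (t+1), s.val + 1 < t → φ (some (s, Sum.inr ())) = some (s, Sum.inr ())) :
    ∀ x, φ x = x := by
  obtain ⟨hfp, hfn⟩ := phi_fix hedge htf ht φ
  have hF : ∀ (s : Fin (t+1)) (w : V), ∃ w',
      φ (some (s, Sum.inl w)) = some (s, Sum.inl w') :=
    fun s w => levels htf ht t φ hfn hfp s (by omega) w
  -- the level-0 map
  set f : V → V := fun w => Classical.choose (hF ⟨0, by omega⟩ w) with hfdef
  have hfspec : ∀ w, φ (some (⟨0, by omega⟩, Sum.inl w)) =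
      some (⟨0, by omega⟩, Sum.inl (f w)) := fun w => Classical.choose_spec (hF _ w)
  have hfinj : Function.Injective f := by
    intro a b hab
    have : φ (some (⟨0, by omega⟩, Sum.inl a)) = φ (some (⟨0, by omega⟩, Sum.inl b)) := by
      rw [hfspec, hfspec, hab]
    have := φ.injective this
    simpa using this
  have hfbij : Function.Bijective f := Finite.injective_iff_bijective.mp hfinj
  set e : V ≃ V := Equiv.ofBijective f hfbij with hedef
  have hmap : ∀ {a b : V}, H.Adj (f a) (f b) ↔ H.Adj a b := by
    intro a b
    have h1 : (Mycielskian (H ⊕g (⊥ : SimpleGraph Unit)) t).Adj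
        (some (⟨0, by omega⟩, Sum.inl (f a))) (some (⟨0, by omega⟩, Sum.inl (f b))) ↔
        (Mycielskian (H ⊕g (⊥ : SimpleGraph Unit)) t).Adj
        (some (⟨0, by omega⟩, Sum.inl a)) (some (⟨0, by omega⟩, Sum.inl b)) := by
      rw [← hfspec, ← hfspec]
      exact φ.map_adj_iff
    rw [myc_adj_zero ht, myc_adj_zero ht, g_adj_inl, g_adj_inl] at h1
    exact h1
  set ψ : (H ⊕g (⊥ : SimpleGraph Unit)) ≃g (H ⊕g (⊥ : SimpleGraph Unit)) :=
    { toEquiv := Equiv.sumCongr e (Equiv.refl Unit),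
      map_rel_iff' := by
        intro a b
        match a, b with
        | Sum.inl a, Sum.inl b => simpa [hedef] using hmap
        | Sum.inl a, Sum.inr b => simp
        | Sum.inr a, Sum.inl b => simp
        | Sum.inr a, Sum.inr b => simp } with hpsidef
  have hψfix : ∀ v ∈ (S₀ : Set (V ⊕ Unit)), ψ v = v := by
    intro v hv
    match v with
    | Sum.inl w =>
      have h1 := hfix0 _ hv
      rw [hfspec w] at h1
      simp only [Option.some.injEq, Prod.mk.injEq, Sum.inl.injEq] at h1
      simpa [hpsidef, hedef] using h1.2
    | Sum.inr () => rfl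
  have hψid : ∀ v, ψ v = v := hdet ψ hψfix
  have hf_id : ∀ w, f w = w := by
    intro w
    have := hψid (Sum.inl w)
    simpa [hpsidef, hedef] using this
  -- level fixed, by upward induction
  have hlevfix : ∀ s : ℕ, (hs : s ≤ t) → ∀ w : V,
      φ (some (⟨s, by omega⟩, Sum.inl w)) = some (⟨s, by omega⟩, Sum.inl w) := by
    intro s
    induction s with
    | zero => intro _ w; rw [hfspec, hf_id]
    | succ s ih =>
      intro hs w
      obtain ⟨w'', hw''⟩ := hF ⟨s+1, by omega⟩ w
      have hkey : ∀ v, H.Adj v w ↔ H.Adj v w'' := by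
        intro v
        rw [← myc_adj_step (H := H) hs (v := v) (w := w),
          ← myc_adj_step (H := H) hs (v := v) (w := w'')]
        have h2 := φ.map_adj_iff (v := some (⟨s, by omega⟩, Sum.inl v))
            (w := some (⟨s+1, by omega⟩, Sum.inl w))
        rw [ih (by omega) v, hw''] at h2
        exact h2.symm
      have : w = w'' := inl_eq_of_nbr htf w w'' hkey
      rw [hw'', ← this]
  -- assemble
  intro x
  match x with
  | none => exact hfn
  | some (s, Sum.inl w) =>
    have := hlevfix s.val (by omega) w
    simpa using this
  | some (s, Sum.inr ()) =>
    rcases Nat.lt_or_ge (s.val + 1) t with hs | hs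
    · exact hfixu s hs
    rcases Nat.lt_or_ge s.val t with hs' | hs'
    · -- s.val = t - 1
      have hiso : ∀ y, ¬ (Mycielskian (H ⊕g (⊥ : SimpleGraph Unit)) t).Adj
          (φ (some (s, Sum.inr ()))) y := by
        intro y hy
        have h1 : (Mycielskian (H ⊕g (⊥ : SimpleGraph Unit)) t).Adj
            (φ (some (s, Sum.inr ()))) (φ (φ.symm y)) := by
          rw [RelIso.apply_symm_apply]; exact hy
        exact isolated_of s hs' _ (φ.map_adj_iff.mp h1)
      obtain ⟨r, hr, hx⟩ := isolated_char htf ht _ hiso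
      rcases Nat.lt_or_ge (r.val + 1) t with hr' | hr'
      · exfalso
        have h2 := hfixu r hr'
        have h3 : φ (some (s, Sum.inr ())) = φ (some (r, Sum.inr ())) := by rw [hx, h2]
        have h4 := φ.injective h3
        simp only [Option.some.injEq, Prod.mk.injEq] at h4
        have : s = r := h4.1
        omega
      · have : r = s := Fin.ext (by omega)
        rw [hx, this]
    · -- s.val = t
      have : s = (⟨t, by omega⟩ : Fin (t+1)) := Fin.ext (show s.val = t by omega)
      rw [this]
      exact hfp

end Main6
section Main7
variable {W : Type*} {G : SimpleGraph W} {t : ℕ}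

/-- lift an automorphism of `G` to the Mycielskian, levelwise -/
def liftIso (ψ : G ≃g G) : (Mycielskian G t) ≃g (Mycielskian G t) where
  toEquiv := Equiv.optionCongr (Equiv.prodCongr (Equiv.refl (Fin (t+1))) ψ.toEquiv)
  map_rel_iff' := by
    intro a b
    match a, b with
    | none, none => exact Iff.rfl
    | none, some (s, i) => exact Iff.rfl
    | some (s, i), none => exact Iff.rfl
    | some (s, i), some (r, j) =>
      show (Mycielskian G t).Adj (some (s, ψ i)) (some (r, ψ j)) ↔ _
      rw [myc_adj_ss, myc_adj_ss]
      exact and_congr ψ.map_adj_iff Iff.rfl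

lemma liftIso_some (ψ : G ≃g G) (s : Fin (t+1)) (i : W) :
    (liftIso (t := t) ψ) (some (s, i)) = some (s, ψ i) := rfl

lemma liftIso_none (ψ : G ≃g G) : (liftIso (t := t) ψ) none = none := rfl

/-- swapping two isolated vertices is an automorphism -/
def swapIso (G' : SimpleGraph W) [DecidableEq W] (x y : W)
    (hx : ∀ z, ¬ G'.Adj x z) (hy : ∀ z, ¬ G'.Adj y z) : G' ≃g G' where
  toEquiv := Equiv.swap x y
  map_rel_iff' := by
    intro a b
    have hiso : ∀ z w, (z = x ∨ z = y) → ¬ G'.Adj z w := by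
      rintro z w (rfl | rfl)
      · exact hx w
      · exact hy w
    by_cases ha : a = x ∨ a = y
    · have ha' : Equiv.swap x y a = x ∨ Equiv.swap x y a = y := by
        rcases ha with rfl | rfl
        · simp
        · simp
      constructor
      · intro h; exact absurd h (hiso _ _ ha')
      · intro h; exact absurd h (hiso _ _ ha)
    · by_cases hb : b = x ∨ b = y
      · have hb' : Equiv.swap x y b = x ∨ Equiv.swap x y b = y := by
          rcases hb with rfl | rfl
          · simp
          · simp
        constructor
        · intro h; exact absurd h.symm (hiso _ _ hb')
        · intro h; exact absurd h.symm (hiso _ _ hb)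
      · push_neg at ha hb
        rw [Equiv.swap_apply_of_ne_of_ne ha.1 ha.2, Equiv.swap_apply_of_ne_of_ne hb.1 hb.2]

lemma univ_determining (G' : SimpleGraph W) [Fintype W] :
    IsDetermining G' ((Finset.univ : Finset W) : Set W) :=
  fun φ h v => h v (Finset.mem_univ v)

lemma detNum_set_nonempty (G' : SimpleGraph W) [Fintype W] :
    {n | ∃ S : Finset W, S.card = n ∧ IsDetermining G' ↑S}.Nonempty :=
  ⟨(Finset.univ : Finset W).card, Finset.univ, rfl, univ_determining G'⟩

lemma detNum_le (G' : SimpleGraph W) (S : Finset W) (h : IsDetermining G' ↑S) :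
    detNum G' ≤ S.card :=
  Nat.sInf_le ⟨S, rfl, h⟩

lemma detNum_exists (G' : SimpleGraph W) [Fintype W] :
    ∃ S : Finset W, S.card = detNum G' ∧ IsDetermining G' ↑S :=
  Nat.sInf_mem (detNum_set_nonempty G')

end Main7
theorem det_mycielskian_twinfree_iso' {V : Type*} [Fintype V] (H : SimpleGraph V)
    (hedge : ∃ a b : V, H.Adj a b)
    (htf : ∀ x y : V ⊕ Unit,
      (H ⊕g (⊥ : SimpleGraph Unit)).neighborSet x =
        (H ⊕g (⊥ : SimpleGraph Unit)).neighborSet y → x = y)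
    (t : ℕ) (ht : 1 ≤ t) :
    detNum (Mycielskian (H ⊕g (⊥ : SimpleGraph Unit)) t) =
      detNum (H ⊕g (⊥ : SimpleGraph Unit)) + t - 1 := by
  classical
  -- upper bound
  obtain ⟨S₀, hS₀card, hS₀det⟩ := detNum_exists (H ⊕g (⊥ : SimpleGraph Unit))
  set D : Finset (Option (Fin (t+1) × (V ⊕ Unit))) :=
    (S₀.image fun v => some ((⟨0, by omega⟩ : Fin (t+1)), v)) ∪
      ((Finset.univ.filter fun s : Fin (t+1) => s.val + 1 < t).image
        fun s => some (s, Sum.inr ())) with hD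
  have hDdet : IsDetermining (Mycielskian (H ⊕g (⊥ : SimpleGraph Unit)) t) ↑D := by
    intro φ hfix
    apply rigid hedge htf ht S₀ hS₀det φ
    · intro v hv
      apply hfix
      rw [hD]
      simp only [Finset.coe_union, Set.mem_union, Finset.coe_image, Set.mem_image,
        Finset.mem_coe]
      exact Or.inl ⟨v, hv, rfl⟩
    · intro s hs
      apply hfix
      rw [hD]
      simp only [Finset.coe_union, Set.mem_union, Finset.coe_image, Set.mem_image,
        Finset.mem_coe]
      exact Or.inr ⟨s, by simp [hs], rfl⟩
  have hDcard : D.card ≤ detNum (H ⊕g (⊥ : SimpleGraph Unit)) + (t - 1) := by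
    calc D.card ≤ (S₀.image fun v => some ((⟨0, by omega⟩ : Fin (t+1)), v)).card +
        ((Finset.univ.filter fun s : Fin (t+1) => s.val + 1 < t).image
          fun s => some (s, Sum.inr ())).card := Finset.card_union_le _ _
    _ ≤ S₀.card + (t - 1) := by
        apply Nat.add_le_add (Finset.card_image_le)
        calc ((Finset.univ.filter fun s : Fin (t+1) => s.val + 1 < t).image
            fun s => some (s, Sum.inr ())).card
            ≤ (Finset.univ.filter fun s : Fin (t+1) => s.val + 1 < t).card :=
              Finset.card_image_le
          _ ≤ (Finset.range (t-1)).card := by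
              apply Finset.card_le_card_of_injOn Fin.val
              · intro a ha
                simp only [Finset.mem_coe, Finset.mem_filter] at ha
                simp only [Finset.mem_coe, Finset.mem_range]
                omega
              · exact fun a _ b _ hab => Fin.val_injective hab
          _ = t - 1 := Finset.card_range _
    _ = detNum (H ⊕g (⊥ : SimpleGraph Unit)) + (t - 1) := by rw [hS₀card]
  have hub : detNum (Mycielskian (H ⊕g (⊥ : SimpleGraph Unit)) t) ≤
      detNum (H ⊕g (⊥ : SimpleGraph Unit)) + (t - 1) :=
    le_trans (detNum_le _ D hDdet) hDcard
  -- lower bound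
  obtain ⟨S, hScard, hSdet⟩ := detNum_exists (Mycielskian (H ⊕g (⊥ : SimpleGraph Unit)) t)
  set I : Finset (Option (Fin (t+1) × (V ⊕ Unit))) :=
    (Finset.univ.filter fun s : Fin (t+1) => s.val < t).image
      fun s => some (s, Sum.inr ()) with hI
  have hmemI : ∀ x, x ∈ I ↔ ∃ s : Fin (t+1), s.val < t ∧ x = some (s, Sum.inr ()) := by
    intro x
    rw [hI]
    simp only [Finset.mem_image, Finset.mem_filter, Finset.mem_univ, true_and]
    constructor
    · rintro ⟨s, hs, rfl⟩; exact ⟨s, hs, rfl⟩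
    · rintro ⟨s, hs, rfl⟩; exact ⟨s, hs, rfl⟩
  have hIcard : I.card = t := by
    rw [hI, Finset.card_image_of_injective _ (fun a b hab => by
      simpa using hab)]
    have h1 : (Finset.univ.filter fun s : Fin (t+1) => ¬ s.val < t) =
        {(⟨t, by omega⟩ : Fin (t+1))} := by
      ext s
      simp [Fin.ext_iff]
      omega
    have h2 := Finset.card_filter_add_card_filter_not
      (s := (Finset.univ : Finset (Fin (t+1)))) (p := fun s : Fin (t+1) => s.val < t)
    rw [h1] at h2
    simp only [Finset.card_singleton, Finset.card_univ, Fintype.card_fin] at h2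
    omega
  have hIsd : (I \ S).card ≤ 1 := by
    rw [Finset.card_le_one]
    intro a ha b hb
    rw [Finset.mem_sdiff] at ha hb
    obtain ⟨s₁, hs₁, rfl⟩ := (hmemI a).mp ha.1
    obtain ⟨s₂, hs₂, rfl⟩ := (hmemI b).mp hb.1
    set τ := swapIso (Mycielskian (H ⊕g (⊥ : SimpleGraph Unit)) t)
      (some (s₁, Sum.inr ())) (some (s₂, Sum.inr ()))
      (isolated_of s₁ hs₁) (isolated_of s₂ hs₂) with hτ
    have hfixτ : ∀ z ∈ (S : Set (Option (Fin (t+1) × (V ⊕ Unit)))), τ z = z := by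
      intro z hz
      rw [hτ]
      show Equiv.swap _ _ z = z
      apply Equiv.swap_apply_of_ne_of_ne
      · rintro rfl; exact ha.2 hz
      · rintro rfl; exact hb.2 hz
    have := hSdet τ hfixτ (some (s₁, Sum.inr ()))
    rw [hτ] at this
    have h3 : Equiv.swap (some (s₁, Sum.inr ()) : Option (Fin (t+1) × (V ⊕ Unit)))
        (some (s₂, Sum.inr ()))
        (some (s₁, Sum.inr ())) = some (s₂, Sum.inr ()) := Equiv.swap_apply_left _ _
    rw [show τ (some (s₁, Sum.inr ())) =
      Equiv.swap (some (s₁, Sum.inr ()) : Option (Fin (t+1) × (V ⊕ Unit)))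
      (some (s₂, Sum.inr ())) (some (s₁, Sum.inr ())) from rfl, h3] at this
    exact this.symm
  have hSI : t - 1 ≤ (I ∩ S).card := by
    have := Finset.card_inter_add_card_sdiff I S
    omega
  -- the projected set
  set P : Option (Fin (t+1) × (V ⊕ Unit)) → Prop :=
    fun x => ∃ (s : Fin (t+1)) (w : V), x = some (s, Sum.inl w) with hP
  set T : Finset (V ⊕ Unit) :=
    (S.filter P).image (fun x => match x with
      | some (_, v) => v
      | none => Sum.inr ()) with hT
  have hTdet : IsDetermining (H ⊕g (⊥ : SimpleGraph Unit)) ↑T := by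
    intro ψ hfixT
    have hfixS : ∀ z ∈ (S : Set (Option (Fin (t+1) × (V ⊕ Unit)))),
        (liftIso (t := t) ψ) z = z := by
      intro z hz
      match z with
      | none => exact liftIso_none ψ
      | some (s, Sum.inl w) =>
        rw [liftIso_some]
        have hwT : Sum.inl w ∈ T := by
          rw [hT, Finset.mem_image]
          exact ⟨some (s, Sum.inl w),
            Finset.mem_filter.mpr ⟨Finset.mem_coe.mp hz, ⟨s, w, rfl⟩⟩, rfl⟩
        rw [hfixT _ hwT]
      | some (s, Sum.inr ()) =>
        rw [liftIso_some, fix_u ψ htf]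
    have hall := hSdet (liftIso (t := t) ψ) hfixS
    intro v
    have := hall (some (⟨0, by omega⟩, v))
    rw [liftIso_some] at this
    simpa using this
  have hTle : detNum (H ⊕g (⊥ : SimpleGraph Unit)) ≤ (S.filter P).card :=
    le_trans (detNum_le _ T hTdet) (by rw [hT]; exact Finset.card_image_le)
  -- disjointness and count
  have hdisj : Disjoint (I ∩ S) (S.filter P) := by
    rw [Finset.disjoint_left]
    intro x hx hx'
    obtain ⟨s, hs, rfl⟩ := (hmemI x).mp (Finset.mem_inter.mp hx).1
    obtain ⟨s', w', hw'⟩ := (Finset.mem_filter.mp hx').2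
    simp at hw'
  have hsub : (I ∩ S) ∪ S.filter P ⊆ S := by
    intro x hx
    rcases Finset.mem_union.mp hx with h | h
    · exact (Finset.mem_inter.mp h).2
    · exact (Finset.mem_filter.mp h).1
  have hlb : detNum (H ⊕g (⊥ : SimpleGraph Unit)) + (t - 1) ≤
      detNum (Mycielskian (H ⊕g (⊥ : SimpleGraph Unit)) t) := by
    rw [← hScard]
    calc detNum (H ⊕g (⊥ : SimpleGraph Unit)) + (t - 1)
        ≤ (S.filter P).card + (I ∩ S).card := Nat.add_le_add hTle hSI
      _ = ((I ∩ S) ∪ S.filter P).card := by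
          rw [Finset.card_union_of_disjoint hdisj]; omega
      _ ≤ S.card := Finset.card_le_card hsub
  omega

/-- for twin-free `G = H + K_1` with `H` having an edge,
`det(μ_t(G)) = det(G) + t − 1`. -/
theorem det_mycielskian_twinfree_iso {V : Type*} [Fintype V] (H : SimpleGraph V)
    (hedge : ∃ a b : V, H.Adj a b)
    (htf : ∀ x y : V ⊕ Unit,
      (H ⊕g (⊥ : SimpleGraph Unit)).neighborSet x =
        (H ⊕g (⊥ : SimpleGraph Unit)).neighborSet y → x = y)
    (t : ℕ) (ht : 1 ≤ t) :
    detNum (Mycielskian (H ⊕g (⊥ : SimpleGraph Unit)) t) =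
      detNum (H ⊕g (⊥ : SimpleGraph Unit)) + t - 1 := by
  exact det_mycielskian_twinfree_iso' H hedge htf t ht
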